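/- Let $\nu, L > 0$, $\sigma \in (0,1)$, $\rho^\star, \theta^\star > 0$, $v^\star \in \mathbb{R}$, $R > 0$, $\theta_1^{(\mathrm{tail})} > 0$ and $r > 0$. If $\big(e^{-\nu L \sigma / c} - e^{-\nu L / c}\big)\, \frac{\rho^\star}{(2\pi\theta^\star)^{3/2}} \exp\!\big(-\tfrac{(c - v^\star)^2}{2\theta^\star}\big) \le R \exp\!\big(-\tfrac{c^2}{2\theta_1^{(\mathrm{tail})}}\big)$ for all $c > r$, then $\theta^\star \le \theta_1^{(\mathrm{tail})}$. That is, even though the prefactor $K_\sigma(\nu L / c) = e^{-\nu L\sigma/c} - e^{-\nu L/c}$ tends to $0$ as $c \to \infty$, the exponentials dominate and Holway's inequality forces the temperature bound. -/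

import Mathlib

set_option maxHeartbeats 1600000 in
/-- **Holway's temperature bound.** Even though the prefactor
`K_σ(νL/c) = e^{-νLσ/c} - e^{-νL/c}` tends to `0` as `c → ∞`, the exponentials dominate:
if `K_σ(νL/c) · ρ⋆/(2πθ⋆)^{3/2} · exp(-(c-v⋆)²/(2θ⋆)) ≤ R exp(-c²/(2θ₁^tail))` for all
`c > r`, then `θ⋆ ≤ θ₁^tail`. -/
theorem holway_temperature_bound
    (ν L σ ρs θs vs R θ1tail r : ℝ)
    (hν : 0 < ν) (hL : 0 < L) (hσ : σ ∈ Set.Ioo (0 : ℝ) 1)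
    (hρs : 0 < ρs) (hθs : 0 < θs) (hR : 0 < R) (hθ1 : 0 < θ1tail) (hr : 0 < r)
    (hle : ∀ c : ℝ, r < c →
        (Real.exp (-(ν * L * σ / c)) - Real.exp (-(ν * L / c))) *
          (ρs / (2 * Real.pi * θs) ^ ((3 : ℝ) / 2) *
            Real.exp (-(c - vs) ^ 2 / (2 * θs)))
        ≤ R * Real.exp (-c ^ 2 / (2 * θ1tail))) :
    θs ≤ θ1tail := by
  by_contra hcon
  push_neg at hcon
  obtain ⟨hσ0, hσ1⟩ := hσ
  set ε : ℝ := 1 / (2 * θ1tail) - 1 / (2 * θs) with hεdef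
  have hεpos : 0 < ε := by
    have h1 : 1 / (2 * θs) < 1 / (2 * θ1tail) := by
      apply one_div_lt_one_div_of_lt <;> nlinarith
    simpa [hεdef] using sub_pos.mpr h1
  set A : ℝ := ρs / (2 * Real.pi * θs) ^ ((3 : ℝ) / 2) with hAdef
  have hApos : 0 < A := by
    have : (0:ℝ) < (2 * Real.pi * θs) ^ ((3 : ℝ) / 2) := by
      apply Real.rpow_pos_of_pos
      have := Real.pi_pos
      nlinarith
    exact div_pos hρs this
  set C : ℝ := Real.exp (-(ν * L / r)) * (1 - σ) * (ν * L) with hCdef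
  have hCpos : 0 < C := by
    have h1 : 0 < Real.exp (-(ν * L / r)) := Real.exp_pos _
    have h2 : 0 < 1 - σ := by linarith
    positivity
  set M : ℝ := R / (C * A) with hMdef
  set b : ℝ := vs / θs with hbdef
  set d : ℝ := -vs ^ 2 / (2 * θs) with hddef
  set c : ℝ := max (r + 1) (max 1 ((|M| + |b| + |d| + 1) / ε)) with hcdef
  have hcr : r < c := lt_of_lt_of_le (by linarith) (le_max_left _ _)
  have hc1 : (1:ℝ) ≤ c := le_trans (le_max_left _ _) (le_max_right _ _)
  have hcM : (|M| + |b| + |d| + 1) / ε ≤ c := le_trans (le_max_right _ _) (le_max_right _ _)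
  have hc0 : 0 < c := by linarith
  have key := hle c hcr
  -- lower bound on the prefactor
  have hdivle : ν * L / c ≤ ν * L / r := by
    apply div_le_div_of_nonneg_left (by positivity) hr (le_of_lt hcr)
  have hK : C / c ≤ Real.exp (-(ν * L * σ / c)) - Real.exp (-(ν * L / c)) := by
    have h1 : Real.exp (-(ν * L / c)) * ((1 - σ) * (ν * L / c))
        ≤ Real.exp (-(ν * L / c)) * (Real.exp ((1 - σ) * (ν * L / c)) - 1) := by
      apply mul_le_mul_of_nonneg_left _ (Real.exp_nonneg _)
      have := Real.add_one_le_exp ((1 - σ) * (ν * L / c))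
      linarith
    have h2 : Real.exp (-(ν * L / c)) * (Real.exp ((1 - σ) * (ν * L / c)) - 1)
        = Real.exp (-(ν * L * σ / c)) - Real.exp (-(ν * L / c)) := by
      rw [mul_sub, mul_one, ← Real.exp_add]
      congr 1
      field_simp
      ring
    have h3 : Real.exp (-(ν * L / r)) ≤ Real.exp (-(ν * L / c)) := by
      apply Real.exp_le_exp.mpr
      linarith
    have h4 : C / c ≤ Real.exp (-(ν * L / c)) * ((1 - σ) * (ν * L / c)) := by
      rw [hCdef]
      have h5 : Real.exp (-(ν * L / r)) * (1 - σ) * (ν * L) / c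
          = Real.exp (-(ν * L / r)) * ((1 - σ) * (ν * L / c)) := by
        field_simp
      rw [h5]
      apply mul_le_mul_of_nonneg_right h3
      have h6 : 0 < (1 - σ) * (ν * L / c) := by
        apply mul_pos (by linarith) (by positivity)
      linarith
    linarith [h1, h4, h2 ▸ le_trans h4 h1]
  -- combine
  set E1 : ℝ := Real.exp (-(c - vs) ^ 2 / (2 * θs)) with hE1
  set E2 : ℝ := Real.exp (-c ^ 2 / (2 * θ1tail)) with hE2
  have hE1pos : 0 < E1 := Real.exp_pos _
  have hE2pos : 0 < E2 := Real.exp_pos _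
  have step1 : C / c * (A * E1) ≤ R * E2 := by
    calc C / c * (A * E1)
        ≤ (Real.exp (-(ν * L * σ / c)) - Real.exp (-(ν * L / c))) * (A * E1) := by
          apply mul_le_mul_of_nonneg_right hK (by positivity)
      _ ≤ R * E2 := key
  have step2 : C * A * E1 ≤ R * c * E2 := by
    have := mul_le_mul_of_nonneg_right step1 (le_of_lt hc0)
    calc C * A * E1 = C / c * (A * E1) * c := by field_simp
      _ ≤ R * E2 * c := this
      _ = R * c * E2 := by ring
  have hE1eq : E1 = E2 * Real.exp (ε * c ^ 2 + b * c + d) := by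
    rw [hE1, hE2, ← Real.exp_add]
    congr 1
    rw [hεdef, hbdef, hddef]
    field_simp
    ring
  have step3 : C * A * Real.exp (ε * c ^ 2 + b * c + d) ≤ R * c := by
    rw [hE1eq] at step2
    have h := le_of_mul_le_mul_right (by linarith [step2] : C * A * Real.exp (ε * c ^ 2 + b * c + d) * E2 ≤ R * c * E2) hE2pos
    exact h
  have hexpX : ε * c ^ 2 + b * c + d ≤ Real.exp (ε * c ^ 2 + b * c + d) := by
    have := Real.add_one_le_exp (ε * c ^ 2 + b * c + d)
    linarith
  have step4 : C * A * (ε * c ^ 2 + b * c + d) ≤ R * c := by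
    calc C * A * (ε * c ^ 2 + b * c + d)
        ≤ C * A * Real.exp (ε * c ^ 2 + b * c + d) := by
          apply mul_le_mul_of_nonneg_left hexpX (by positivity)
      _ ≤ R * c := step3
  have hCA : 0 < C * A := mul_pos hCpos hApos
  clear_value ε A C M b d c E1 E2
  have step5 : ε * c ^ 2 + b * c + d ≤ M * c := by
    have h2 : M * (C * A) = R := by
      rw [hMdef]; exact div_mul_cancel₀ R hCA.ne'
    have hr1 : (ε * c ^ 2 + b * c + d) * (C * A) ≤ M * c * (C * A) := by
      calc (ε * c ^ 2 + b * c + d) * (C * A)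
          = C * A * (ε * c ^ 2 + b * c + d) := by ring
        _ ≤ R * c := step4
        _ = M * (C * A) * c := by rw [h2]
        _ = M * c * (C * A) := by ring
    exact le_of_mul_le_mul_right hr1 hCA
  -- contradiction: the quadratic beats the linear bound
  have hεc : |M| + |b| + |d| + 1 ≤ ε * c := by
    have := mul_le_mul_of_nonneg_right hcM (le_of_lt hεpos)
    calc |M| + |b| + |d| + 1 = (|M| + |b| + |d| + 1) / ε * ε :=
          (div_mul_cancel₀ _ hεpos.ne').symm
      _ ≤ c * ε := by
          apply mul_le_mul_of_nonneg_right hcM (le_of_lt hεpos)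
      _ = ε * c := by ring
  have hM : M ≤ |M| := le_abs_self M
  have hb : -b ≤ |b| := neg_le_abs b
  have hd : -d ≤ |d| := neg_le_abs d
  have hεc2 : (|M| + |b| + |d| + 1) * c ≤ ε * c ^ 2 := by
    nlinarith [mul_le_mul_of_nonneg_right hεc (le_of_lt hc0)]
  have p1 : M * c ≤ |M| * c := mul_le_mul_of_nonneg_right hM hc0.le
  have p2 : -b * c ≤ |b| * c := mul_le_mul_of_nonneg_right hb hc0.le
  have p3 : |d| ≤ |d| * c := by nlinarith [abs_nonneg d, hc1]
  linarith [step5, hεc2, p1, p2, p3, hd, hc1]
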